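/- For any x ∈ MSS_6 = [0,2]_Z^3 \ {(1,1,1)}, the fundamental group Π_1^6(MSS_6, x) is trivial. -/

import Mathlib

/- ## General framework for digital topology -/

variable {α : Type*}

/-- A (2,κ)-continuous path of length `m` in the digital image `X`. -/
def PathOn (X : Set α) (κ : α → α → Prop) (m : ℕ) (f : ℕ → α) : Prop :=
  (∀ i ≤ m, f i ∈ X) ∧ ∀ i < m, f i = f (i + 1) ∨ κ (f i) (f (i + 1))

/-- A κ-loop of length `m` based at `x0`. -/
def IsLoop (X : Set α) (κ : α → α → Prop) (x0 : α) (m : ℕ) (f : ℕ → α) : Prop :=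
  PathOn X κ m f ∧ f 0 = x0 ∧ f m = x0

/-- `f'` (of length `m'`) is a trivial extension of `f` (of length `m`):
it traverses the same path, with pauses. -/
def TrivExt (m : ℕ) (f : ℕ → α) (m' : ℕ) (f' : ℕ → α) : Prop :=
  ∃ φ : ℕ → ℕ, φ 0 = 0 ∧ φ m' = m ∧
    (∀ i < m', φ (i + 1) = φ i ∨ φ (i + 1) = φ i + 1) ∧
    ∀ i ≤ m', f' i = f (φ i)

/-- A homotopy between loops `F` and `G` of the same length `m`, holding the
endpoints fixed at `x0`. -/
def HtpyFixed (X : Set α) (κ : α → α → Prop) (x0 : α) (m M : ℕ) (F G : ℕ → α) : Prop :=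
  ∃ H : ℕ → ℕ → α,
    (∀ s ≤ m, ∀ t ≤ M, H s t ∈ X) ∧
    (∀ s ≤ m, H s 0 = F s ∧ H s M = G s) ∧
    (∀ t ≤ M, ∀ s, s < m → (H s t = H (s + 1) t ∨ κ (H s t) (H (s + 1) t))) ∧
    (∀ s ≤ m, ∀ t, t < M → (H s t = H s (t + 1) ∨ κ (H s t) (H s (t + 1)))) ∧
    (∀ t ≤ M, H 0 t = x0 ∧ H m t = x0)

/-- Two loops based at `x0` belong to the same loop class: they have trivial
extensions of a common length which are homotopic holding the endpoints fixed. -/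
def LoopEquiv (X : Set α) (κ : α → α → Prop) (x0 : α)
    (m : ℕ) (f : ℕ → α) (n : ℕ) (g : ℕ → α) : Prop :=
  ∃ m' f' g', TrivExt m f m' f' ∧ TrivExt n g m' g' ∧ ∃ M, HtpyFixed X κ x0 m' M f' g'

/-- The digital fundamental group `Π_1^κ(X,x0)` is trivial: every κ-loop based
at `x0` is in the class of the constant loop. -/
def Pi1Trivial (X : Set α) (κ : α → α → Prop) (x0 : α) : Prop :=
  ∀ m f, IsLoop X κ x0 m f → LoopEquiv X κ x0 m f 0 (fun _ => x0)

/-- Adjacent or equal. -/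
def AdjEq (κ : α → α → Prop) (a b : α) : Prop := a = b ∨ κ a b

/-- `H` is a κ-homotopy (of length `M`) from the identity map of `X` to a constant map. -/
def Contraction (X : Set α) (κ : α → α → Prop) (M : ℕ) (H : α → ℕ → α) : Prop :=
  (∀ x ∈ X, ∀ t ≤ M, H x t ∈ X) ∧
  (∀ x ∈ X, H x 0 = x) ∧
  (∃ p ∈ X, ∀ x ∈ X, H x M = p) ∧
  (∀ t ≤ M, ∀ x ∈ X, ∀ y ∈ X, κ x y → AdjEq κ (H x t) (H y t)) ∧
  (∀ x ∈ X, ∀ t, t < M → AdjEq κ (H x t) (H x (t + 1)))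

/-- `X` is κ-contractible. -/
def Contractible (X : Set α) (κ : α → α → Prop) : Prop :=
  ∃ M H, Contraction X κ M H

/-- `(X,x0)` is pointed κ-contractible: a contraction to `x0` holding `x0` fixed. -/
def PointedContractible (X : Set α) (κ : α → α → Prop) (x0 : α) : Prop :=
  ∃ M H, Contraction X κ M H ∧ (∀ t ≤ M, H x0 t = x0) ∧ ∀ x ∈ X, H x M = x0

/-- The subset `Y` of `X` is κ-nullhomotopic in `X`: its inclusion map is
homotopic in `X` to a constant map. -/
def NullhomotopicIn (Y X : Set α) (κ : α → α → Prop) : Prop :=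
  ∃ M, ∃ H : α → ℕ → α,
    (∀ y ∈ Y, ∀ t ≤ M, H y t ∈ X) ∧
    (∀ y ∈ Y, H y 0 = y) ∧
    (∃ p ∈ X, ∀ y ∈ Y, H y M = p) ∧
    (∀ t ≤ M, ∀ x ∈ Y, ∀ y ∈ Y, κ x y → AdjEq κ (H x t) (H y t)) ∧
    (∀ y ∈ Y, ∀ t, t < M → AdjEq κ (H y t) (H y (t + 1)))

/-- `P` is a κ-path subset of `X`: the image of a κ-path in `X`. -/
def IsPathSubset (P X : Set α) (κ : α → α → Prop) : Prop :=
  ∃ m f, PathOn X κ m f ∧ (∀ i ≤ m, f i ∈ P) ∧ ∀ p ∈ P, ∃ i ≤ m, f i = p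

/-- `X` has no κ-hole: every κ-path subset of `X` is κ-nullhomotopic in `X`. -/
def NoHole (X : Set α) (κ : α → α → Prop) : Prop :=
  ∀ P : Set α, IsPathSubset P X κ → NullhomotopicIn P X κ

/-- `X` is κ-connected (and nonempty). -/
def ConnectedDig (X : Set α) (κ : α → α → Prop) : Prop :=
  X.Nonempty ∧ ∀ a ∈ X, ∀ b ∈ X, ∃ m f, PathOn X κ m f ∧ f 0 = a ∧ f m = b

/-- The κ-component of `x` in `X`. -/
def Component (X : Set α) (κ : α → α → Prop) (x : α) : Set α :=
  {y | y ∈ X ∧ ∃ m f, PathOn X κ m f ∧ f 0 = x ∧ f m = y}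

/-- A loop-preserving homotopy from the loop `f` to the loop `g`
(each stage is a loop; the basepoint may move). -/
def LoopPresHtpy (X : Set α) (κ : α → α → Prop) (m M : ℕ)
    (f g : ℕ → α) (H : ℕ → ℕ → α) : Prop :=
  (∀ s ≤ m, ∀ t ≤ M, H s t ∈ X) ∧
  (∀ s ≤ m, H s 0 = f s ∧ H s M = g s) ∧
  (∀ t ≤ M, ∀ s, s < m → (H s t = H (s + 1) t ∨ κ (H s t) (H (s + 1) t))) ∧
  (∀ s ≤ m, ∀ t, t < M → (H s t = H s (t + 1) ∨ κ (H s t) (H s (t + 1)))) ∧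
  (∀ t ≤ M, H 0 t = H m t)

/-- `X` has no κ-loophole: every κ-loop in `X` is nullhomotopic in `X` by a
loop-preserving homotopy. -/
def NoLoophole (X : Set α) (κ : α → α → Prop) : Prop :=
  ∀ m f, PathOn X κ m f → f 0 = f m →
    ∃ p ∈ X, ∃ M H, LoopPresHtpy X κ m M f (fun _ => p) H

/- ## Concrete adjacencies and images -/

/-- 6-adjacency (c₁-adjacency) on ℤ³. -/
def adj6 (p q : ℤ × ℤ × ℤ) : Prop :=
  |p.1 - q.1| + |p.2.1 - q.2.1| + |p.2.2 - q.2.2| = 1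

/-- 26-adjacency (c₃-adjacency) on ℤ³. -/
def adj26 (p q : ℤ × ℤ × ℤ) : Prop :=
  p ≠ q ∧ |p.1 - q.1| ≤ 1 ∧ |p.2.1 - q.2.1| ≤ 1 ∧ |p.2.2 - q.2.2| ≤ 1

/-- 18-adjacency (c₂-adjacency) on ℤ³. -/
def adj18 (p q : ℤ × ℤ × ℤ) : Prop :=
  adj26 p q ∧ (p.1 = q.1 ∨ p.2.1 = q.2.1 ∨ p.2.2 = q.2.2)

/-- 4-adjacency (c₁-adjacency) on ℤ². -/
def adj4 (p q : ℤ × ℤ) : Prop := |p.1 - q.1| + |p.2 - q.2| = 1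

/-- 8-adjacency (c₂-adjacency) on ℤ². -/
def adj8 (p q : ℤ × ℤ) : Prop := p ≠ q ∧ |p.1 - q.1| ≤ 1 ∧ |p.2 - q.2| ≤ 1

/-- 2-adjacency (c₁-adjacency) on ℤ. -/
def adj2 (m n : ℤ) : Prop := |m - n| = 1

/-- The 10-point digital 2-sphere `MSS₁₈`. -/
def MSS18 : Set (ℤ × ℤ × ℤ) :=
  {(0,0,0), (1,1,0), (1,2,0), (0,3,0), (-1,2,0),
   (-1,1,0), (0,1,-1), (0,2,-1), (0,2,1), (0,1,1)}

/-- The 6-point digital 2-sphere `MSS'₁₈ = MSS'₂₆`. -/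
def MSS18' : Set (ℤ × ℤ × ℤ) :=
  {(0,0,0), (1,1,0), (0,2,0), (-1,1,0), (0,1,-1), (0,1,1)}

/-- The digital 2-sphere `MSS₆ = [0,2]³ \ {(1,1,1)}`. -/
def MSS6 : Set (ℤ × ℤ × ℤ) :=
  {p | (0 ≤ p.1 ∧ p.1 ≤ 2) ∧ (0 ≤ p.2.1 ∧ p.2.1 ≤ 2) ∧ (0 ≤ p.2.2 ∧ p.2.2 ≤ 2) ∧ p ≠ (1,1,1)}

/-- The image `X = ([0,2]² × [0,1]) \ {(1,1,1)}` of Example 2.11. -/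
def Xbox : Set (ℤ × ℤ × ℤ) :=
  {p | (0 ≤ p.1 ∧ p.1 ≤ 2) ∧ (0 ≤ p.2.1 ∧ p.2.1 ≤ 2) ∧ (0 ≤ p.2.2 ∧ p.2.2 ≤ 1) ∧ p ≠ (1,1,1)}


section Assemble

variable {X : Set α} {κ : α → α → Prop} {x0 : α} {m : ℕ} {f : ℕ → α}

lemma adjeq_of_close (hsym : ∀ a b, κ a b → κ b a) {γ : ℕ → α} {M : ℕ} (hstep : ∀ t < M, γ t = γ (t+1) ∨ κ (γ t) (γ (t+1)))
    {a b : ℕ} (ha : a ≤ M) (hb : b ≤ M) (h : a = b ∨ a + 1 = b ∨ b + 1 = a) :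
    γ a = γ b ∨ κ (γ a) (γ b) := by
  rcases h with h | h | h
  · left; rw [h]
  · have := hstep a (by omega); rw [h] at this; exact this
  · have := hstep b (by omega); rw [h] at this
    rcases this with h2 | h2
    · left; exact h2.symm
    · right; exact hsym _ _ h2

lemma assemble (hsym : ∀ a b, κ a b → κ b a) (m' M : ℕ) (hM : 1 ≤ M) (T : ℕ → ℕ → α)
    (hTE : TrivExt m f m' (T 0))
    (mem : ∀ t ≤ M, ∀ s ≤ m', T t s ∈ X)
    (row : ∀ t ≤ M, ∀ s < m', T t s = T t (s+1) ∨ κ (T t s) (T t (s+1)))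
    (col : ∀ t < M, ∀ s ≤ m', T t s = T (t+1) s ∨ κ (T t s) (T (t+1) s))
    (lp : ∀ t ≤ M, T t 0 = T t m')
    (base : T 0 0 = x0)
    (top : ∀ s ≤ m', T M s = T M 0) :
    LoopEquiv X κ x0 m f 0 (fun _ => x0) := by
  obtain ⟨φ, hφ0, hφm, hφstep, hφval⟩ := hTE
  set γ : ℕ → α := fun t => T t 0 with hγ
  have γstep : ∀ t < M, γ t = γ (t+1) ∨ κ (γ t) (γ (t+1)) := by
    intro t ht; exact col t ht 0 (Nat.zero_le _)
  have γ0 : γ 0 = x0 := base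
  have γmem : ∀ t ≤ M, γ t ∈ X := fun t ht => mem t ht 0 (Nat.zero_le _)
  set m'' := 2 * M + m' with hm''
  set H : ℕ → ℕ → α := fun s t =>
    if t ≤ M then
      (if s ≤ M then γ (min s t)
       else if s ≤ M + m' then T t (s - M)
       else γ (min (m'' - s) t))
    else γ (min (min s (m'' - s)) (2*M - t)) with hH
  have fm : f m = x0 := by
    have h1 : T 0 m' = f m := by rw [hφval m' le_rfl, hφm]
    have h2 : T 0 m' = T 0 0 := (lp 0 (Nat.zero_le _)).symm
    rw [← h1, h2, base]
  have f0 : f 0 = x0 := by rw [← base, hφval 0 (Nat.zero_le _), hφ0]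
  refine ⟨m'', fun s => H s 0, fun _ => x0, ?_, ?_, 2*M, H, ?_, ?_, ?_, ?_, ?_⟩
  · -- TrivExt m f m'' (H · 0)
    refine ⟨fun i => if i ≤ M then 0 else if i ≤ M + m' then φ (i - M) else m, ?_, ?_, ?_, ?_⟩
    · simp
    · dsimp only
      rw [if_neg (by omega), if_neg (by omega)]
    · intro i hi
      dsimp only
      by_cases h1 : i + 1 ≤ M
      · rw [if_pos h1, if_pos (by omega : i ≤ M)]; left; rfl
      · by_cases h2 : i + 1 ≤ M + m'
        · rw [if_neg h1, if_pos h2]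
          by_cases h3 : i ≤ M
          · have hiM : i = M := by omega
            subst hiM
            rw [if_pos le_rfl]
            rw [show i + 1 - i = 1 by omega]
            have := hφstep 0 (by omega)
            rw [hφ0] at this
            rcases this with h | h
            · left; rw [h]
            · right; rw [h]
          · rw [if_neg h3, if_pos (by omega)]
            rw [show i + 1 - M = (i - M) + 1 by omega]
            exact hφstep (i - M) (by omega)
        · rw [if_neg h1, if_neg h2]
          by_cases h3 : i ≤ M
          · have hm'0 : m' = 0 := by omega
            have hm0 : m = 0 := by rw [← hφm, hm'0, hφ0]
            rw [if_pos h3]; left; exact hm0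
          · by_cases h4 : i ≤ M + m'
            · rw [if_neg h3, if_pos h4]
              have : i = M + m' := by omega
              left; rw [this, show M + m' - M = m' by omega, hφm]
            · rw [if_neg h3, if_neg h4]; left; rfl
    · intro i hi
      simp only [hH]
      rw [if_pos (Nat.zero_le M)]
      by_cases h1 : i ≤ M
      · rw [if_pos h1, if_pos h1, Nat.min_zero, γ0, f0]
      · by_cases h2 : i ≤ M + m'
        · rw [if_neg h1, if_pos h2, if_neg h1, if_pos h2]
          exact hφval (i - M) (by omega)
        · rw [if_neg h1, if_neg h2, if_neg h1, if_neg h2, Nat.min_zero, γ0, fm]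
  · -- TrivExt 0 const m'' const
    exact ⟨fun _ => 0, rfl, rfl, fun i _ => Or.inl rfl, fun i _ => rfl⟩
  · -- membership
    intro s hs t ht
    simp only [hH]
    by_cases h1 : t ≤ M
    · rw [if_pos h1]
      by_cases h2 : s ≤ M
      · rw [if_pos h2]; exact γmem _ (by omega)
      · by_cases h3 : s ≤ M + m'
        · rw [if_neg h2, if_pos h3]; exact mem t h1 _ (by omega)
        · rw [if_neg h2, if_neg h3]; exact γmem _ (by omega)
    · rw [if_neg h1]; exact γmem _ (by omega)
  · -- boundary rows
    intro s hs
    constructor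
    · rfl
    · simp only [hH]
      rw [if_neg (by omega)]
      rw [show 2*M - 2*M = 0 by omega, Nat.min_zero, γ0]
  · -- rows are paths
    intro t ht s hs
    simp only [hH]
    by_cases hb0 : t ≤ M
    case neg =>
      rw [if_neg hb0, if_neg hb0]
      exact adjeq_of_close hsym γstep (by omega) (by omega) (by omega)
    rw [if_pos hb0, if_pos hb0]
    have ht := hb0
    by_cases h1 : s + 1 ≤ M
    · rw [if_pos (by omega), if_pos h1]
      exact adjeq_of_close hsym γstep (by omega) (by omega) (by omega)
    · by_cases h2 : s + 1 ≤ M + m'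
      · rw [if_neg h1, if_pos h2]
        by_cases h3 : s ≤ M
        · have hsM : s = M := by omega
          rw [if_pos h3, show s + 1 - M = 1 by omega, show min s t = t by omega]
          exact row t ht 0 (by omega)
        · rw [if_neg h3, if_pos (by omega)]
          rw [show s + 1 - M = (s - M) + 1 by omega]
          exact row t ht (s - M) (by omega)
      · rw [if_neg h1, if_neg h2]
        by_cases h3 : s ≤ M + m'
        · by_cases h4 : s ≤ M
          · -- s = M = M + m', m' = 0
            rw [if_pos h4]
            exact adjeq_of_close hsym γstep (by omega) (by omega) (by omega)
          · rw [if_neg h4, if_pos h3]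
            have hsm : s = M + m' := by omega
            rw [hsm, show M + m' - M = m' by omega, show m'' - (M + m' + 1) = M - 1 by omega]
            rw [← lp t ht]
            exact adjeq_of_close hsym γstep (by omega) (by omega) (by omega)
        · rw [if_neg (by omega), if_neg (by omega)]
          exact adjeq_of_close hsym γstep (by omega) (by omega) (by omega)
  · -- columns
    intro s hs t ht
    simp only [hH]
    by_cases h1 : t + 1 ≤ M
    · rw [if_pos (by omega), if_pos h1]
      by_cases h2 : s ≤ M
      · rw [if_pos h2, if_pos h2]
        exact adjeq_of_close hsym γstep (by omega) (by omega) (by omega)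
      · by_cases h3 : s ≤ M + m'
        · rw [if_neg h2, if_pos h3, if_neg h2, if_pos h3]
          exact col t (by omega) _ (by omega)
        · rw [if_neg h2, if_neg h3, if_neg h2, if_neg h3]
          exact adjeq_of_close hsym γstep (by omega) (by omega) (by omega)
    · by_cases h0 : t ≤ M
      · -- t = M
        have htM : t = M := by omega
        rw [if_pos h0, if_neg h1]
        rw [show 2*M - (t+1) = M - 1 by omega, htM]
        by_cases h2 : s ≤ M
        · rw [if_pos h2]
          rw [show min s (m'' - s) = s by omega]
          rw [show min s M = s by omega]
          exact adjeq_of_close hsym γstep (by omega) (by omega) (by omega)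
        · by_cases h3 : s ≤ M + m'
          · rw [if_neg h2, if_pos h3]
            rw [top _ (by omega)]
            rw [show min (min s (m'' - s)) (M - 1) = M - 1 by omega]
            exact adjeq_of_close hsym γstep (by omega) (by omega) (by omega)
          · rw [if_neg h2, if_neg h3]
            rw [show min (m'' - s) M = m'' - s by omega]
            rw [show min (min s (m'' - s)) (M-1) = min (m'' - s) (M - 1) by omega]
            exact adjeq_of_close hsym γstep (by omega) (by omega) (by omega)
      · rw [if_neg h0, if_neg (by omega)]
        exact adjeq_of_close hsym γstep (by omega) (by omega) (by omega)
  · -- endpoints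
    intro t ht
    simp only [hH]
    constructor
    · by_cases h1 : t ≤ M
      · rw [if_pos h1, if_pos (Nat.zero_le M), Nat.zero_min, γ0]
      · rw [if_neg h1, Nat.zero_min, Nat.zero_min, γ0]
    · by_cases h1 : t ≤ M
      · rw [if_pos h1, if_neg (by omega), if_neg (by omega)]
        rw [show m'' - m'' = 0 by omega, Nat.zero_min, γ0]
      · rw [if_neg h1]
        rw [show m'' - m'' = 0 by omega, Nat.min_zero, Nat.zero_min, γ0]
end Assemble
section Transport

lemma pi1_transport {X : Set α} {κ : α → α → Prop} (e : α → α)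
    (heX : ∀ p ∈ X, e p ∈ X) (heκ : ∀ a b, κ a b → κ (e a) (e b))
    (hee : ∀ p, e (e p) = p) {x0 : α}
    (h : Pi1Trivial X κ (e x0)) : Pi1Trivial X κ x0 := by
  intro m f hf
  obtain ⟨⟨hmem, hadj⟩, hf0, hfm⟩ := hf
  have hloop : IsLoop X κ (e x0) m (fun i => e (f i)) := by
    refine ⟨⟨fun i hi => heX _ (hmem i hi), fun i hi => ?_⟩, by simp only []; rw [hf0], by simp only []; rw [hfm]⟩
    rcases hadj i hi with h' | h'
    · exact Or.inl (congrArg e h')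
    · exact Or.inr (heκ _ _ h')
  obtain ⟨m', f', g', ⟨φ1, hφ10, hφ1m, hφ1s, hφ1v⟩, ⟨φ2, hφ20, hφ2m, hφ2s, hφ2v⟩, M, H,
    Hmem, Hbd, Hrow, Hcol, Hend⟩ := h m _ hloop
  refine ⟨m', fun s => e (f' s), fun s => e (g' s),
    ⟨φ1, hφ10, hφ1m, hφ1s, fun i hi => ?_⟩, ⟨φ2, hφ20, hφ2m, hφ2s, fun i hi => ?_⟩,
    M, fun s t => e (H s t), fun s hs t ht => heX _ (Hmem s hs t ht),
    fun s hs => ⟨congrArg e (Hbd s hs).1, congrArg e (Hbd s hs).2⟩,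
    fun t ht s hs => ?_, fun s hs t ht => ?_,
    fun t ht => ⟨by show e (H 0 t) = x0; rw [(Hend t ht).1, hee], by show e (H m' t) = x0; rw [(Hend t ht).2, hee]⟩⟩
  · show e (f' i) = f (φ1 i)
    rw [hφ1v i hi]; exact hee _
  · show e (g' i) = x0
    rw [hφ2v i hi]; exact hee x0
  · rcases Hrow t ht s hs with h' | h'
    · exact Or.inl (congrArg e h')
    · exact Or.inr (heκ _ _ h')
  · rcases Hcol s hs t ht with h' | h'
    · exact Or.inl (congrArg e h')
    · exact Or.inr (heκ _ _ h')

end Transport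
section Concrete

abbrev Pt := ℤ × ℤ × ℤ

def qT : Pt := (1,1,2)

def NqP (u : Pt) : Prop := u = (0,1,2) ∨ u = (2,1,2) ∨ u = (1,0,2) ∨ u = (1,2,2)

def wfun (u v : Pt) : Pt :=
  if (u.1 = 1 ↔ v.1 = 1) ∧ u ≠ v then (if u.1 = 1 then (0,1,2) else (1,0,2)) else u

def cfun (a b : Pt) : Pt := if a = b then a else (a.1 + b.1 - 1, a.2.1 + b.2.1 - 1, 2)

lemma mem_MSS6_iff (p : Pt) : p ∈ MSS6 ↔
    (0 ≤ p.1 ∧ p.1 ≤ 2) ∧ (0 ≤ p.2.1 ∧ p.2.1 ≤ 2) ∧ (0 ≤ p.2.2 ∧ p.2.2 ≤ 2) ∧ p ≠ (1,1,1) :=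
  Iff.rfl

instance (p q : Pt) : Decidable (adj6 p q) := by unfold adj6; infer_instance
instance (p : Pt) : Decidable (p ∈ MSS6) := decidable_of_iff' _ (mem_MSS6_iff p)
instance (u : Pt) : Decidable (NqP u) := by unfold NqP; infer_instance
instance (a b : Pt) : Decidable (AdjEq adj6 a b) := by unfold AdjEq; infer_instance

lemma nq_of_adj {p : Pt} (hp : p ∈ MSS6) (h : adj6 p qT) : NqP p := by
  obtain ⟨x, y, z⟩ := p
  rw [mem_MSS6_iff] at hp
  simp only [adj6, qT, NqP, Prod.ext_iff, Prod.mk.injEq, ne_eq, Int.abs_eq_natAbs] at *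
  omega

lemma nq_mem {u : Pt} (h : NqP u) : u ∈ MSS6 := by
  rcases h with h | h | h | h <;> subst h <;> decide

lemma nq_ne_q {u : Pt} (h : NqP u) : u ≠ qT := by
  rcases h with h | h | h | h <;> subst h <;> decide

lemma wq_lemmas {u v : Pt} (hu : NqP u) (hv : NqP v) :
    NqP (wfun u v) ∧ adj6 qT (wfun u v) ∧
    AdjEq adj6 u (cfun u (wfun u v)) ∧ AdjEq adj6 (cfun u (wfun u v)) (wfun u v) ∧
    AdjEq adj6 v (cfun (wfun u v) v) ∧ AdjEq adj6 (wfun u v) (cfun (wfun u v) v) ∧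
    cfun u (wfun u v) ∈ MSS6 ∧ cfun (wfun u v) v ∈ MSS6 ∧
    cfun u (wfun u v) ≠ qT ∧ cfun (wfun u v) v ≠ qT := by
  rcases hu with h | h | h | h <;> subst h <;>
    rcases hv with h | h | h | h <;> subst h <;> decide

def rz (p : Pt) : Pt := (p.1, p.2.1, max (p.2.2 - 1) 0)
def rx (p : Pt) : Pt := (max (p.1 - 1) 0, p.2.1, p.2.2)
def ry (p : Pt) : Pt := (p.1, max (p.2.1 - 1) 0, p.2.2)

lemma stages_mem {b : Pt} (hb : b ∈ MSS6) (hq : b ≠ qT) :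
    rz b ∈ MSS6 ∧ rz (rz b) ∈ MSS6 ∧ rx (rz (rz b)) ∈ MSS6 ∧
    rx (rx (rz (rz b))) ∈ MSS6 ∧ ry (rx (rx (rz (rz b)))) ∈ MSS6 ∧
    ry (ry (rx (rx (rz (rz b))))) = ((0:ℤ),(0:ℤ),(0:ℤ)) := by
  obtain ⟨x, y, z⟩ := b
  rw [mem_MSS6_iff] at hb
  obtain ⟨⟨hx0, hx2⟩, ⟨hy0, hy2⟩, ⟨hz0, hz2⟩, hne⟩ := hb
  interval_cases x <;> interval_cases y <;> interval_cases z <;>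
    first
      | (exfalso; exact hne rfl)
      | (exfalso; exact hq rfl)
      | decide

lemma rz_adj {a b : Pt} (h : adj6 a b) : AdjEq adj6 (rz a) (rz b) := by
  obtain ⟨x, y, z⟩ := a; obtain ⟨x', y', z'⟩ := b
  unfold AdjEq adj6 rz at *
  simp only [Prod.mk.injEq, Int.abs_eq_natAbs] at *
  rcases max_cases (z-1) (0:ℤ) with ⟨h1,h2⟩|⟨h1,h2⟩ <;>
    rcases max_cases (z'-1) (0:ℤ) with ⟨h3,h4⟩|⟨h3,h4⟩ <;> rw [h1, h3] <;> omega

lemma rx_adj {a b : Pt} (h : adj6 a b) : AdjEq adj6 (rx a) (rx b) := by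
  obtain ⟨x, y, z⟩ := a; obtain ⟨x', y', z'⟩ := b
  unfold AdjEq adj6 rx at *
  simp only [Prod.mk.injEq, Int.abs_eq_natAbs] at *
  rcases max_cases (x-1) (0:ℤ) with ⟨h1,h2⟩|⟨h1,h2⟩ <;>
    rcases max_cases (x'-1) (0:ℤ) with ⟨h3,h4⟩|⟨h3,h4⟩ <;> rw [h1, h3] <;> omega

lemma ry_adj {a b : Pt} (h : adj6 a b) : AdjEq adj6 (ry a) (ry b) := by
  obtain ⟨x, y, z⟩ := a; obtain ⟨x', y', z'⟩ := b
  unfold AdjEq adj6 ry at *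
  simp only [Prod.mk.injEq, Int.abs_eq_natAbs] at *
  rcases max_cases (y-1) (0:ℤ) with ⟨h1,h2⟩|⟨h1,h2⟩ <;>
    rcases max_cases (y'-1) (0:ℤ) with ⟨h3,h4⟩|⟨h3,h4⟩ <;> rw [h1, h3] <;> omega

lemma step_adjeq {b : Pt} (hb : b ∈ MSS6) :
    AdjEq adj6 b (rz b) ∧ AdjEq adj6 b (rx b) ∧ AdjEq adj6 b (ry b) := by
  obtain ⟨x, y, z⟩ := b
  rw [mem_MSS6_iff] at hb
  obtain ⟨⟨hx0, hx2⟩, ⟨hy0, hy2⟩, ⟨hz0, hz2⟩, hne⟩ := hb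
  interval_cases x <;> interval_cases y <;> interval_cases z <;>
    first
      | (exfalso; exact hne rfl)
      | decide

lemma adj6_symm {a b : Pt} (h : adj6 a b) : adj6 b a := by
  obtain ⟨x, y, z⟩ := a; obtain ⟨x', y', z'⟩ := b
  simp only [adj6, Int.abs_eq_natAbs] at *
  omega

end Concrete
section PhaseA

/-- largest `t ≤ i` with `F t ≠ qT` (assuming `F 0 ≠ qT`). -/
def pqf (F : ℕ → Pt) : ℕ → ℕ
  | 0 => 0
  | i+1 => if F (i+1) = qT then pqf F i else i+1

def nqa (F : ℕ → Pt) : ℕ → ℕ → ℕ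
  | 0, i => i
  | fuel+1, i => if F i = qT then nqa F fuel (i+1) else i

/-- smallest `t ≥ i` with `F t ≠ qT` (assuming `F t ≠ qT` for `t > m`). -/
def nqf (F : ℕ → Pt) (m i : ℕ) : ℕ := nqa F (m + 1 - i) i

variable {F : ℕ → Pt} {m : ℕ}

lemma pqf_le (i : ℕ) : pqf F i ≤ i := by
  induction i with
  | zero => exact le_rfl
  | succ n ih => rw [pqf]; split <;> omega

lemma pqf_notq (h0 : F 0 ≠ qT) (i : ℕ) : F (pqf F i) ≠ qT := by
  induction i with
  | zero => exact h0
  | succ n ih => rw [pqf]; split; exact ih; assumption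

lemma pqf_eq {i : ℕ} (h : F i ≠ qT) : pqf F i = i := by
  cases i with
  | zero => rfl
  | succ n => rw [pqf, if_neg h]

lemma pqf_step {i : ℕ} (h : F (i+1) = qT) : pqf F (i+1) = pqf F i := by
  rw [pqf, if_pos h]

lemma pqf_between {i : ℕ} : ∀ t, pqf F i < t → t ≤ i → F t = qT := by
  induction i with
  | zero => omega
  | succ n ih =>
    intro t h1 h2
    by_cases hq : F (n+1) = qT
    · rw [pqf_step hq] at h1
      rcases Nat.lt_or_ge t (n+1) with h | h
      · exact ih t h1 (by omega)
      · have : t = n + 1 := by omega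
        rw [this]; exact hq
    · rw [pqf_eq hq] at h1; omega

lemma nqa_ge (fuel i : ℕ) : i ≤ nqa F fuel i := by
  induction fuel generalizing i with
  | zero => exact le_rfl
  | succ n ih =>
    rw [nqa]; split
    · exact le_trans (by omega) (ih (i+1))
    · exact le_rfl

lemma nqa_notq (fuel i : ℕ) (h : ∀ t, i + fuel ≤ t → F t ≠ qT) : F (nqa F fuel i) ≠ qT := by
  induction fuel generalizing i with
  | zero => exact h i (by omega)
  | succ n ih =>
    rw [nqa]; split
    · exact ih (i+1) (fun t ht => h t (by omega))
    · assumption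

lemma nqa_between (fuel i : ℕ) : ∀ t, i ≤ t → t < nqa F fuel i → F t = qT := by
  induction fuel generalizing i with
  | zero => intro t h1 h2; rw [nqa] at h2; omega
  | succ n ih =>
    intro t h1 h2
    rw [nqa] at h2
    by_cases hq : F i = qT
    · rw [if_pos hq] at h2
      rcases Nat.eq_or_lt_of_le h1 with h | h
      · rw [← h]; exact hq
      · exact ih (i+1) t h h2
    · rw [if_neg hq] at h2; omega

lemma nqf_ge (i : ℕ) : i ≤ nqf F m i := nqa_ge _ _

lemma nqf_notq (hq : ∀ t, m ≤ t → F t ≠ qT) (i : ℕ) : F (nqf F m i) ≠ qT := by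
  refine nqa_notq _ _ (fun t ht => ?_)
  rcases Nat.lt_or_ge i (m+1) with h | h
  · exact hq t (by omega)
  · exact hq t (by omega)

lemma nqf_between (i : ℕ) : ∀ t, i ≤ t → t < nqf F m i → F t = qT := nqa_between _ _

lemma nqf_eq {i : ℕ} (h : F i ≠ qT) : nqf F m i = i := by
  rw [nqf]
  rcases Nat.exists_eq_add_of_le (Nat.zero_le (m + 1 - i)) with ⟨k, hk⟩
  cases hfuel : m + 1 - i with
  | zero => rfl
  | succ n => rw [nqa, if_neg h]

lemma nqf_step (hq : ∀ t, m ≤ t → F t ≠ qT) {i : ℕ} (h : F i = qT) :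
    nqf F m i = nqf F m (i+1) := by
  have him : i < m := by
    by_contra hc
    exact hq i (by omega) h
  rw [nqf, nqf, show m + 1 - i = (m + 1 - (i+1)) + 1 by omega, nqa, if_pos h]

end PhaseA
section PhaseA2

lemma adjeq_symm {a b : Pt} (h : AdjEq adj6 a b) : AdjEq adj6 b a := by
  rcases h with h | h
  · exact Or.inl h.symm
  · exact Or.inr (adj6_symm h)

lemma adjeq_map {r : Pt → Pt} (hr : ∀ a b, adj6 a b → AdjEq adj6 (r a) (r b))
    {a b : Pt} (h : AdjEq adj6 a b) : AdjEq adj6 (r a) (r b) := by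
  rcases h with h | h
  · exact Or.inl (congrArg r h)
  · exact hr a b h


variable {F : ℕ → Pt} {m : ℕ} {x0 : Pt}

section WithHyps

variable (hFmem : ∀ i, F i ∈ MSS6)
  (hFadj : ∀ i, F i = F (i+1) ∨ adj6 (F i) (F (i+1)))
  (hFm : ∀ t, m ≤ t → F t = x0) (hF0 : F 0 = x0) (hx0 : x0 ≠ qT)

include hFm hx0 in
lemma hFq : ∀ t, m ≤ t → F t ≠ qT := fun t ht => by rw [hFm t ht]; exact hx0

include hF0 hx0 in
lemma hF0q : F 0 ≠ qT := by rw [hF0]; exact hx0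

include hFmem hFadj hF0 hx0 in
lemma uNq {i : ℕ} (h : F i = qT) : NqP (F (pqf F i)) := by
  have h0q : F 0 ≠ qT := hF0q hF0 hx0
  have hlt : pqf F i < i := by
    have := pqf_le (F := F) i
    rcases Nat.eq_or_lt_of_le this with he | hlt
    · exfalso; apply pqf_notq h0q i; rw [he]; exact h
    · exact hlt
  have hq1 : F (pqf F i + 1) = qT := pqf_between (i := i) _ (by omega) (by omega)
  have hadj : adj6 (F (pqf F i)) qT := by
    rcases hFadj (pqf F i) with he | ha
    · exfalso; exact pqf_notq h0q i (by rw [he, hq1])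
    · rw [hq1] at ha; exact ha
  exact nq_of_adj (hFmem _) hadj

include hFmem hFadj hFm hx0 in
lemma vNq {i : ℕ} (h : F i = qT) : NqP (F (nqf F m i)) := by
  have hq' : ∀ t, m ≤ t → F t ≠ qT := hFq hFm hx0
  have hgt : i < nqf F m i := by
    have := nqf_ge (F := F) (m := m) i
    rcases Nat.eq_or_lt_of_le this with he | hlt
    · exfalso; apply nqf_notq hq' i; rw [← he]; exact h
    · exact hlt
  have hq1 : F (nqf F m i - 1) = qT := nqf_between (m := m) i _ (by omega) (by omega)
  have hadj : adj6 qT (F (nqf F m i)) := by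
    rcases hFadj (nqf F m i - 1) with he | ha
    · exfalso
      apply nqf_notq hq' i
      rw [show nqf F m i = (nqf F m i - 1) + 1 by omega, ← he, hq1]
    · rw [show (nqf F m i - 1) + 1 = nqf F m i by omega, hq1] at ha
      exact ha
  exact nq_of_adj (hFmem _) (adj6_symm hadj)

end WithHyps

end PhaseA2
section PhaseA3

/-- Block description of stage A. -/
def gAblock (F : ℕ → Pt) (m i j : ℕ) : Pt :=
  if F i = qT then wfun (F (pqf F i)) (F (nqf F m i))
  else if j = 3 ∧ F (i+1) = qT then cfun (F i) (wfun (F i) (F (nqf F m (i+1))))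
  else if j = 0 ∧ F (i-1) = qT then cfun (wfun (F (pqf F (i-1))) (F i)) (F i)
  else F i

def gA (F : ℕ → Pt) (m : ℕ) (s : ℕ) : Pt := gAblock F m (s/4) (s%4)

variable {F : ℕ → Pt} {m : ℕ} {x0 : Pt}

variable (hFmem : ∀ i, F i ∈ MSS6)
  (hFadj : ∀ i, F i = F (i+1) ∨ adj6 (F i) (F (i+1)))
  (hFm : ∀ t, m ≤ t → F t = x0) (hF0 : F 0 = x0) (hx0 : x0 ≠ qT)

include hFmem hFadj hF0 hx0 in
lemma NqFi_left {i : ℕ} (hqi : F i ≠ qT) (hqi1 : F (i+1) = qT) : NqP (F i) := by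
  have h := uNq hFmem hFadj hF0 hx0 hqi1
  rwa [pqf_step hqi1, pqf_eq hqi] at h

include hFmem hFadj hFm hF0 hx0 in
lemma NqFi_right {i : ℕ} (hqi1 : F (i-1) = qT) (hqi : F i ≠ qT) :
    NqP (F i) ∧ nqf F m (i-1) = i := by
  have hi1 : 1 ≤ i := by
    rcases Nat.eq_zero_or_pos i with h | h
    · exfalso; apply hF0q hF0 hx0; rw [h] at hqi1; simpa using hqi1
    · exact h
  have hnq : nqf F m (i-1) = i := by
    rw [nqf_step (hFq hFm hx0) hqi1, show i - 1 + 1 = i by omega, nqf_eq hqi]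
  have h := vNq hFmem hFadj hFm hx0 hqi1
  rw [hnq] at h
  exact ⟨h, hnq⟩

include hFmem hFadj hFm hF0 hx0 in
lemma rowA {i j : ℕ} (hj : j < 3) :
    AdjEq adj6 (gAblock F m i j) (gAblock F m i (j+1)) := by
  unfold gAblock
  by_cases hqi : F i = qT
  · rw [if_pos hqi, if_pos hqi]; exact Or.inl rfl
  · rw [if_neg hqi, if_neg hqi, if_neg (fun h => absurd h.1 (by omega : ¬ j = 3))]
    by_cases hL : j = 0 ∧ F (i-1) = qT
    · rw [if_pos hL]
      have hj0 := hL.1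
      rw [if_neg (fun h => absurd h.1 (by omega : ¬ j + 1 = 3)),
          if_neg (fun h => absurd h.1 (by omega : ¬ j + 1 = 0))]
      obtain ⟨hNv, hnq⟩ := NqFi_right hFmem hFadj hFm hF0 hx0 hL.2 hqi
      have hNu := uNq hFmem hFadj hF0 hx0 hL.2
      have W := wq_lemmas hNu hNv
      exact adjeq_symm W.2.2.2.2.1
    · rw [if_neg hL]
      by_cases hR : j + 1 = 3 ∧ F (i+1) = qT
      · rw [if_pos hR]
        have hNu := NqFi_left hFmem hFadj hF0 hx0 hqi hR.2
        have hNv := vNq hFmem hFadj hFm hx0 hR.2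
        have W := wq_lemmas hNu hNv
        exact W.2.2.1
      · rw [if_neg hR, if_neg (fun h => absurd h.1 (by omega : ¬ j + 1 = 0))]
        exact Or.inl rfl

include hFmem hFadj hFm hF0 hx0 in
lemma rowB (i : ℕ) :
    AdjEq adj6 (gAblock F m i 3) (gAblock F m (i+1) 0) := by
  unfold gAblock
  by_cases hqi : F i = qT <;> by_cases hqi1 : F (i+1) = qT
  · rw [if_pos hqi, if_pos hqi1, pqf_step hqi1, nqf_step (hFq hFm hx0) hqi]
    exact Or.inl rfl
  · rw [if_pos hqi, if_neg hqi1,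
        if_neg (fun h => absurd h.1 (by omega : ¬ (0:ℕ) = 3)),
        if_pos (⟨rfl, by rw [Nat.add_sub_cancel]; exact hqi⟩ : (0:ℕ) = 0 ∧ F (i+1-1) = qT),
        Nat.add_sub_cancel]
    have hnq : nqf F m i = i + 1 := by
      rw [nqf_step (hFq hFm hx0) hqi, nqf_eq hqi1]
    have hNu := uNq hFmem hFadj hF0 hx0 hqi
    have hNv := vNq hFmem hFadj hFm hx0 hqi
    rw [hnq] at hNv
    rw [hnq]
    have W := wq_lemmas hNu hNv
    exact W.2.2.2.2.2.1
  · rw [if_neg hqi, if_pos hqi1, if_pos (⟨rfl, hqi1⟩ : (3:ℕ) = 3 ∧ F (i+1) = qT),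
        pqf_step hqi1, pqf_eq hqi]
    have hNu := NqFi_left hFmem hFadj hF0 hx0 hqi hqi1
    have hNv := vNq hFmem hFadj hFm hx0 hqi1
    have W := wq_lemmas hNu hNv
    exact W.2.2.2.1
  · rw [if_neg hqi, if_neg hqi1, if_neg (fun h => absurd h.2 hqi1),
        if_neg (fun h => absurd h.1 (by omega : ¬ (3:ℕ) = 0)),
        if_neg (fun h => absurd h.1 (by omega : ¬ (0:ℕ) = 3)),
        if_neg (fun h : (0:ℕ) = 0 ∧ F (i+1-1) = qT =>
          absurd (show F i = qT by have h2 := h.2; rwa [Nat.add_sub_cancel] at h2) hqi)]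
    exact hFadj i

include hFmem hFadj hFm hF0 hx0 in
lemma ptwiseA (i j : ℕ) : AdjEq adj6 (F i) (gAblock F m i j) := by
  unfold gAblock
  by_cases hqi : F i = qT
  · rw [if_pos hqi, hqi]
    have W := wq_lemmas (uNq hFmem hFadj hF0 hx0 hqi) (vNq hFmem hFadj hFm hx0 hqi)
    exact Or.inr W.2.1
  · rw [if_neg hqi]
    by_cases hR : j = 3 ∧ F (i+1) = qT
    · rw [if_pos hR]
      have W := wq_lemmas (NqFi_left hFmem hFadj hF0 hx0 hqi hR.2)
        (vNq hFmem hFadj hFm hx0 hR.2)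
      exact W.2.2.1
    · rw [if_neg hR]
      by_cases hL : j = 0 ∧ F (i-1) = qT
      · rw [if_pos hL]
        have W := wq_lemmas (uNq hFmem hFadj hF0 hx0 hL.2)
          (NqFi_right hFmem hFadj hFm hF0 hx0 hL.2 hqi).1
        exact W.2.2.2.2.1
      · rw [if_neg hL]; exact Or.inl rfl

include hFmem hFadj hFm hF0 hx0 in
lemma memA (i j : ℕ) : gAblock F m i j ∈ MSS6 := by
  unfold gAblock
  by_cases hqi : F i = qT
  · rw [if_pos hqi]
    have W := wq_lemmas (uNq hFmem hFadj hF0 hx0 hqi) (vNq hFmem hFadj hFm hx0 hqi)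
    exact nq_mem W.1
  · rw [if_neg hqi]
    by_cases hR : j = 3 ∧ F (i+1) = qT
    · rw [if_pos hR]
      have W := wq_lemmas (NqFi_left hFmem hFadj hF0 hx0 hqi hR.2)
        (vNq hFmem hFadj hFm hx0 hR.2)
      exact W.2.2.2.2.2.2.1
    · rw [if_neg hR]
      by_cases hL : j = 0 ∧ F (i-1) = qT
      · rw [if_pos hL]
        have W := wq_lemmas (uNq hFmem hFadj hF0 hx0 hL.2)
          (NqFi_right hFmem hFadj hFm hF0 hx0 hL.2 hqi).1
        exact W.2.2.2.2.2.2.2.1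
      · rw [if_neg hL]; exact hFmem i

include hFmem hFadj hFm hF0 hx0 in
lemma qfreeA (i j : ℕ) : gAblock F m i j ≠ qT := by
  unfold gAblock
  by_cases hqi : F i = qT
  · rw [if_pos hqi]
    have W := wq_lemmas (uNq hFmem hFadj hF0 hx0 hqi) (vNq hFmem hFadj hFm hx0 hqi)
    exact nq_ne_q W.1
  · rw [if_neg hqi]
    by_cases hR : j = 3 ∧ F (i+1) = qT
    · rw [if_pos hR]
      have W := wq_lemmas (NqFi_left hFmem hFadj hF0 hx0 hqi hR.2)
        (vNq hFmem hFadj hFm hx0 hR.2)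
      exact W.2.2.2.2.2.2.2.2.1
    · rw [if_neg hR]
      by_cases hL : j = 0 ∧ F (i-1) = qT
      · rw [if_pos hL]
        have W := wq_lemmas (uNq hFmem hFadj hF0 hx0 hL.2)
          (NqFi_right hFmem hFadj hFm hF0 hx0 hL.2 hqi).1
        exact W.2.2.2.2.2.2.2.2.2
      · rw [if_neg hL]; exact hqi

include hFm hF0 hx0 in
lemma endsA {i j : ℕ} (hj : j = 0) (him : i = 0 ∨ m + 1 ≤ i) : gAblock F m i j = x0 := by
  have hfi : F i = x0 := by
    rcases him with h | h
    · rw [h]; exact hF0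
    · exact hFm i (by omega)
  have hqi : F i ≠ qT := by rw [hfi]; exact hx0
  have hqi1 : F (i-1) ≠ qT := by
    rcases him with h | h
    · rw [h]; simpa [hF0] using hx0
    · rw [hFm (i-1) (by omega)]; exact hx0
  unfold gAblock
  rw [if_neg hqi, if_neg (fun h => absurd h.1 (by omega : ¬ j = 3)),
      if_neg (fun h => absurd h.2 hqi1)]
  exact hfi

end PhaseA3
section Main

def Tstage (F : ℕ → Pt) (m : ℕ) : ℕ → ℕ → Pt := fun t s =>
  match t with
  | 0 => F (s/4)
  | 1 => gA F m s
  | 2 => rz (gA F m s)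
  | 3 => rz (rz (gA F m s))
  | 4 => rx (rz (rz (gA F m s)))
  | 5 => rx (rx (rz (rz (gA F m s))))
  | 6 => ry (rx (rx (rz (rz (gA F m s)))))
  | _+7 => ry (ry (rx (rx (rz (rz (gA F m s))))))

lemma pi1_main (x0 : Pt) (hx : x0 ∈ MSS6) (hq0 : x0 ≠ qT) : Pi1Trivial MSS6 adj6 x0 := by
  intro m f hf
  obtain ⟨⟨hmem, hadj⟩, hf0, hfm⟩ := hf
  set F : ℕ → Pt := fun i => f (min i m) with hF
  have hFmem : ∀ i, F i ∈ MSS6 := fun i => hmem _ (Nat.min_le_right i m)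
  have hFadj : ∀ i, F i = F (i+1) ∨ adj6 (F i) (F (i+1)) := by
    intro i
    rcases Nat.lt_or_ge i m with h | h
    · have e1 : min i m = i := by omega
      have e2 : min (i+1) m = i+1 := by omega
      show f (min i m) = f (min (i+1) m) ∨ adj6 (f (min i m)) (f (min (i+1) m))
      rw [e1, e2]; exact hadj i h
    · have e1 : min i m = m := by omega
      have e2 : min (i+1) m = m := by omega
      show f (min i m) = f (min (i+1) m) ∨ adj6 (f (min i m)) (f (min (i+1) m))
      rw [e1, e2]; left; rfl
  have hFm : ∀ t, m ≤ t → F t = x0 := by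
    intro t ht
    show f (min t m) = x0
    rw [show min t m = m by omega]; exact hfm
  have hF0 : F 0 = x0 := by
    show f (min 0 m) = x0
    rw [show min 0 m = 0 by omega]; exact hf0
  have memG : ∀ s : ℕ, gA F m s ∈ MSS6 := fun s =>
    memA hFmem hFadj hFm hF0 hq0 (s/4) (s%4)
  have qfreeG : ∀ s : ℕ, gA F m s ≠ qT := fun s =>
    qfreeA hFmem hFadj hFm hF0 hq0 (s/4) (s%4)
  have ST := fun s : ℕ => stages_mem (memG s) (qfreeG s)
  have rowG : ∀ s : ℕ, AdjEq adj6 (gA F m s) (gA F m (s+1)) := by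
    intro s
    by_cases h3 : s % 4 = 3
    · show AdjEq adj6 (gAblock F m (s/4) (s%4)) (gAblock F m ((s+1)/4) ((s+1)%4))
      rw [h3, show (s+1)/4 = s/4 + 1 by omega, show (s+1)%4 = 0 by omega]
      exact rowB hFmem hFadj hFm hF0 hq0 (s/4)
    · show AdjEq adj6 (gAblock F m (s/4) (s%4)) (gAblock F m ((s+1)/4) ((s+1)%4))
      rw [show (s+1)/4 = s/4 by omega, show (s+1)%4 = s%4 + 1 by omega]
      exact rowA hFmem hFadj hFm hF0 hq0 (by omega : s % 4 < 3)
  have e0 : gA F m 0 = x0 := by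
    show gAblock F m (0/4) (0%4) = x0
    rw [show (0:ℕ)/4 = 0 by omega, show (0:ℕ)%4 = 0 by omega]
    exact endsA hFm hF0 hq0 rfl (Or.inl rfl)
  have em' : gA F m (4*m+4) = x0 := by
    show gAblock F m ((4*m+4)/4) ((4*m+4)%4) = x0
    rw [show (4*m+4)/4 = m+1 by omega, show (4*m+4)%4 = 0 by omega]
    exact endsA hFm hF0 hq0 rfl (Or.inr (le_refl (m+1)))
  apply assemble (fun a b h => adj6_symm h) (4*m+4) 7 (by omega) (Tstage F m)
  · -- TrivExt
    refine ⟨fun s => min (s/4) m, by simp, by dsimp only; omega, fun i hi => by dsimp only; omega, fun i hi => rfl⟩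
  · -- mem
    intro t ht s hs
    interval_cases t
    · exact hFmem _
    · exact memG s
    · exact (ST s).1
    · exact (ST s).2.1
    · exact (ST s).2.2.1
    · exact (ST s).2.2.2.1
    · exact (ST s).2.2.2.2.1
    · show ry (ry (rx (rx (rz (rz (gA F m s)))))) ∈ MSS6
      rw [(ST s).2.2.2.2.2]; decide
  · -- rows
    intro t ht s hs
    have h0 : (s+1)/4 = s/4 ∨ (s+1)/4 = s/4 + 1 := by omega
    interval_cases t
    · show F (s/4) = F ((s+1)/4) ∨ adj6 (F (s/4)) (F ((s+1)/4))
      rcases h0 with h | h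
      · rw [h]; left; rfl
      · rw [h]; exact hFadj (s/4)
    · exact rowG s
    · exact adjeq_map (fun a b h => rz_adj h) (rowG s)
    · exact adjeq_map (fun a b h => rz_adj h) (adjeq_map (fun a b h => rz_adj h) (rowG s))
    · exact adjeq_map (fun a b h => rx_adj h) (adjeq_map (fun a b h => rz_adj h)
        (adjeq_map (fun a b h => rz_adj h) (rowG s)))
    · exact adjeq_map (fun a b h => rx_adj h) (adjeq_map (fun a b h => rx_adj h)
        (adjeq_map (fun a b h => rz_adj h) (adjeq_map (fun a b h => rz_adj h) (rowG s))))
    · exact adjeq_map (fun a b h => ry_adj h) (adjeq_map (fun a b h => rx_adj h)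
        (adjeq_map (fun a b h => rx_adj h) (adjeq_map (fun a b h => rz_adj h)
        (adjeq_map (fun a b h => rz_adj h) (rowG s)))))
    · exact adjeq_map (fun a b h => ry_adj h) (adjeq_map (fun a b h => ry_adj h)
        (adjeq_map (fun a b h => rx_adj h) (adjeq_map (fun a b h => rx_adj h)
        (adjeq_map (fun a b h => rz_adj h) (adjeq_map (fun a b h => rz_adj h) (rowG s))))))
  · -- cols
    intro t ht s hs
    interval_cases t
    · exact ptwiseA hFmem hFadj hFm hF0 hq0 (s/4) (s%4)
    · exact (step_adjeq (memG s)).1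
    · exact (step_adjeq (ST s).1).1
    · exact (step_adjeq (ST s).2.1).2.1
    · exact (step_adjeq (ST s).2.2.1).2.1
    · exact (step_adjeq (ST s).2.2.2.1).2.2
    · exact (step_adjeq (ST s).2.2.2.2.1).2.2
  · -- lp
    intro t ht
    have eF : F ((4*m+4)/4) = x0 := by
      rw [show (4*m+4)/4 = m + 1 by omega]; exact hFm (m+1) (by omega)
    have eF0 : F (0/4) = x0 := by rw [show (0:ℕ)/4 = 0 by omega]; exact hF0
    interval_cases t
    · show F (0/4) = F ((4*m+4)/4); rw [eF, eF0]
    · show gA F m 0 = gA F m (4*m+4); rw [e0, em']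
    · show rz (gA F m 0) = rz (gA F m (4*m+4)); rw [e0, em']
    · show rz (rz (gA F m 0)) = rz (rz (gA F m (4*m+4))); rw [e0, em']
    · show rx (rz (rz (gA F m 0))) = rx (rz (rz (gA F m (4*m+4)))); rw [e0, em']
    · show rx (rx (rz (rz (gA F m 0)))) = rx (rx (rz (rz (gA F m (4*m+4))))); rw [e0, em']
    · show ry (rx (rx (rz (rz (gA F m 0))))) = ry (rx (rx (rz (rz (gA F m (4*m+4))))))
      rw [e0, em']
    · show ry (ry (rx (rx (rz (rz (gA F m 0)))))) = ry (ry (rx (rx (rz (rz (gA F m (4*m+4)))))))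
      rw [e0, em']
  · -- base
    show F (0/4) = x0
    rw [show (0:ℕ)/4 = 0 by omega]; exact hF0
  · -- top
    intro s hs
    show ry (ry (rx (rx (rz (rz (gA F m s)))))) = ry (ry (rx (rx (rz (rz (gA F m 0))))))
    rw [(ST s).2.2.2.2.2, (ST 0).2.2.2.2.2]

end Main
section Final

theorem stmt10' : ∀ x ∈ MSS6, Pi1Trivial MSS6 adj6 x := by
  intro x hx
  by_cases hq : x = qT
  · subst hq
    refine pi1_transport (fun p => (p.1, p.2.1, 2 - p.2.2)) ?_ ?_ ?_ ?_
    · intro p hp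
      obtain ⟨a, b, c⟩ := p
      rw [mem_MSS6_iff] at hp
      rw [mem_MSS6_iff]
      simp only [Prod.ext_iff, Prod.mk.injEq, ne_eq] at *
      omega
    · intro p p' h
      obtain ⟨a, b, c⟩ := p; obtain ⟨a', b', c'⟩ := p'
      show adj6 (a, b, 2 - c) (a', b', 2 - c')
      unfold adj6 at *
      simp only [Int.abs_eq_natAbs] at *
      omega
    · intro p
      obtain ⟨a, b, c⟩ := p
      show ((a : ℤ), (b : ℤ), (2 - (2 - c) : ℤ)) = (a, b, c)
      simp only [Prod.mk.injEq]
      refine ⟨trivial, trivial, ?_⟩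
      omega
    · have e1 : ((fun p : Pt => (p.1, p.2.1, 2 - p.2.2)) qT) = ((1:ℤ),(1:ℤ),(0:ℤ)) := by
        decide
      rw [show ((qT.1, qT.2.1, 2 - qT.2.2) : Pt) = ((1:ℤ),(1:ℤ),(0:ℤ)) from e1]
      exact pi1_main ((1:ℤ),(1:ℤ),(0:ℤ)) (by decide) (by decide)
  · exact pi1_main x hx hq

end Final

/-- `Π₁⁶(MSS₆, x)` is trivial for every `x ∈ MSS₆`. -/
theorem stmt10 : ∀ x ∈ MSS6, Pi1Trivial MSS6 adj6 x := stmt10'
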